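/- Let λ_2(EᵀE) denote the second-smallest eigenvalue (counted with multiplicity) of EᵀE. Suppose x ∈ ℝⁿ satisfies ‖x‖ ≥ 1 and the vector D x has at least one strictly positive entry and at least one strictly negative entry. Then xᵀ A x ≥ (1 / Σ_{i=1}^n r_i) · (λ_2(EᵀE)/n) · min_{1 ≤ i ≤ n} d_i². -/

import Mathlib

open Matrix Real Finset

/-- The orthogonal projection matrix `P = I − g gᵀ` for `g ∈ ℝ²`. -/
noncomputable def proj (g : Fin 2 → ℝ) : Matrix (Fin 2) (Fin 2) ℝ :=
  1 - Matrix.vecMulVec g g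

/-- The 2×2 rotation matrix `R(α)`. -/
noncomputable def Rmat (α : ℝ) : Matrix (Fin 2) (Fin 2) ℝ :=
  !![Real.cos α, -Real.sin α; Real.sin α, Real.cos α]

/-- `x^⊥ := R(π/2) x`. -/
noncomputable def perp (x : Fin 2 → ℝ) : Fin 2 → ℝ :=
  Rmat (Real.pi / 2) *ᵥ x

lemma perp_apply (x : Fin 2 → ℝ) : perp x = ![-(x 1), x 0] := by
  funext i
  fin_cases i <;>
    simp [perp, Rmat, Matrix.mulVec, dotProduct, Fin.sum_univ_two,
      Real.cos_pi_div_two, Real.sin_pi_div_two]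

lemma entry_eq (a b c : Fin 2 → ℝ) (ha : a ⬝ᵥ a = 1) :
    b ⬝ᵥ proj a *ᵥ c = (perp a ⬝ᵥ b) * (perp a ⬝ᵥ c) := by
  have ha' : a 0 ^ 2 + a 1 ^ 2 = 1 := by
    simpa [dotProduct, Fin.sum_univ_two, sq] using ha
  simp only [proj, perp_apply, dotProduct, Matrix.mulVec, Matrix.sub_apply,
    Matrix.one_apply, Matrix.vecMulVec_apply, Fin.sum_univ_two]
  norm_num
  linear_combination (-(b 0 * c 0 + b 1 * c 1)) * ha'

lemma perp_antisymm (a b : Fin 2 → ℝ) : perp a ⬝ᵥ b = -(perp b ⬝ᵥ a) := by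
  simp [perp_apply, dotProduct, Fin.sum_univ_two]
  ring

/-- The matrix `A` whose row `i` has entries
`[A]_{i,i−1} = (1/r_{i−1}) g_iᵀ P_{i−1} g_{i−2}`,
`[A]_{i,i} = (1/r_{i−1}) g_iᵀ P_{i−1} g_i + (1/r_i) g_{i−1}ᵀ P_i g_{i−1}`,
`[A]_{i,i+1} = (1/r_i) g_{i−1}ᵀ P_i g_{i+1}`, and all other entries of row `i` zero
(indices modulo `n`). -/
noncomputable def Amat (n : ℕ) [NeZero n] (g : ZMod n → Fin 2 → ℝ) (r : ZMod n → ℝ) :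
    Matrix (ZMod n) (ZMod n) ℝ := fun i j =>
  (if j = i - 1 then (1 / r (i - 1)) * (g i ⬝ᵥ proj (g (i - 1)) *ᵥ g (i - 2)) else 0) +
  (if j = i then
      (1 / r (i - 1)) * (g i ⬝ᵥ proj (g (i - 1)) *ᵥ g i) +
      (1 / r i) * (g (i - 1) ⬝ᵥ proj (g i) *ᵥ g (i - 1))
    else 0) +
  (if j = i + 1 then (1 / r i) * (g (i - 1) ⬝ᵥ proj (g i) *ᵥ g (i + 1)) else 0)

lemma quad_eq (n : ℕ) [NeZero n] (g : ZMod n → Fin 2 → ℝ) (hg : ∀ i, g i ⬝ᵥ g i = 1)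
    (r : ZMod n → ℝ) (x : ZMod n → ℝ) :
    x ⬝ᵥ Amat n g r *ᵥ x =
      ∑ i, (1 / r i) *
        ((perp (g i) ⬝ᵥ g (i - 1)) * x i - (perp (g (i+1)) ⬝ᵥ g (i + 1 - 1)) * x (i + 1)) ^ 2 := by
  set d : ZMod n → ℝ := fun i => perp (g i) ⬝ᵥ g (i - 1) with hd
  have e1 : ∀ i : ZMod n, g i ⬝ᵥ proj (g (i - 1)) *ᵥ g (i - 2) = (-(d i)) * d (i - 1) := by
    intro i
    rw [entry_eq _ _ _ (hg (i-1)), perp_antisymm (g (i-1)) (g i)]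
    have h2 : i - 2 = i - 1 - 1 := by ring
    simp [hd, h2]
  have e2 : ∀ i : ZMod n, g i ⬝ᵥ proj (g (i - 1)) *ᵥ g i = d i ^ 2 := by
    intro i
    rw [entry_eq _ _ _ (hg (i-1)), perp_antisymm (g (i-1)) (g i)]
    simp [hd]; ring
  have e3 : ∀ i : ZMod n, g (i - 1) ⬝ᵥ proj (g i) *ᵥ g (i - 1) = d i ^ 2 := by
    intro i; rw [entry_eq _ _ _ (hg i)]; simp [hd]; ring
  have e4 : ∀ i : ZMod n, g (i - 1) ⬝ᵥ proj (g i) *ᵥ g (i + 1) = d i * (-(d (i+1))) := by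
    intro i
    rw [entry_eq _ _ _ (hg i), perp_antisymm (g i) (g (i+1))]
    have h2 : i + 1 - 1 = i := by ring
    simp [hd, h2]
  have hA : Amat n g r = fun i j =>
      (if j = i - 1 then (1 / r (i-1)) * ((-(d i)) * d (i-1)) else 0) +
      (if j = i then (1 / r (i-1)) * d i ^ 2 + (1 / r i) * d i ^ 2 else 0) +
      (if j = i + 1 then (1 / r i) * (d i * (-(d (i+1)))) else 0) := by
    funext i j
    simp only [Amat, e1, e2, e3, e4]
  have step1 : x ⬝ᵥ Amat n g r *ᵥ x =
      ∑ i, ((x i * (1 / r (i-1)) * (d i ^2 * x i - d i * d (i-1) * x (i-1))) +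
            (x i * (1 / r i) * (d i ^2 * x i - d i * d (i+1) * x (i+1)))) := by
    rw [hA]
    simp only [dotProduct, Matrix.mulVec]
    refine Finset.sum_congr rfl fun i _ => ?_
    simp only [dotProduct, add_mul, ite_mul, zero_mul, Finset.sum_add_distrib,
      Finset.sum_ite_eq', Finset.mem_univ, if_true]
    ring
  have shift : ∀ f : ZMod n → ℝ, ∑ i, f i = ∑ i, f (i + 1) := by
    intro f
    exact Fintype.sum_equiv (Equiv.addRight (1 : ZMod n)) _ _ (fun i => rfl) |>.symm
  have hrhs : ∀ i : ZMod n,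
      (1 / r i) * (d i * x i - d (i + 1) * x (i + 1)) ^ 2 =
      (1 / r i) * ((perp (g i) ⬝ᵥ g (i - 1)) * x i
        - (perp (g (i+1)) ⬝ᵥ g (i + 1 - 1)) * x (i + 1)) ^ 2 := by
    intro i; rw [hd]
  rw [step1, Finset.sum_add_distrib,
    shift (fun i => x i * (1 / r (i-1)) * (d i ^2 * x i - d i * d (i-1) * x (i-1))),
    ← Finset.sum_add_distrib]
  refine Finset.sum_congr rfl fun i _ => ?_
  rw [← hrhs i]
  have h2 : i + 1 - 1 = i := by ring
  simp only [h2]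
  ring

/-- The diagonal matrix `D` with diagonal entries `dᵢ = (gᵢ^⊥)ᵀ g_{i−1}`. -/
noncomputable def Dmat (n : ℕ) [NeZero n] (g : ZMod n → Fin 2 → ℝ) :
    Matrix (ZMod n) (ZMod n) ℝ :=
  Matrix.diagonal fun i => perp (g i) ⬝ᵥ g (i - 1)

/-- The incidence matrix `E` of the directed circular graph on `n` vertices:
`[E]_{i,i} = 1`, `[E]_{i,i+1} = −1` (indices modulo `n`), all other entries zero. -/
def Emat (n : ℕ) [NeZero n] : Matrix (ZMod n) (ZMod n) ℝ := fun i j =>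
  if j = i then 1 else if j = i + 1 then -1 else 0

lemma one_ne_zero_zmod (n : ℕ) (hn : 3 ≤ n) : (1 : ZMod n) ≠ 0 := by
  intro h
  rw [show (1 : ZMod n) = ((1 : ℕ) : ZMod n) by norm_num,
    ZMod.natCast_eq_zero_iff] at h
  exact absurd (Nat.le_of_dvd one_pos h) (by omega)

lemma Emat_mulVec (n : ℕ) [NeZero n] (hn : 3 ≤ n) (v : ZMod n → ℝ) (i : ZMod n) :
    (Emat n *ᵥ v) i = v i - v (i + 1) := by
  have h1 : i ≠ i + 1 := by
    intro h
    apply one_ne_zero_zmod n hn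
    linear_combination -h
  rw [Matrix.mulVec, dotProduct]
  have : ∀ j : ZMod n, Emat n i j * v j =
      (if j = i then v j else 0) + (if j = i + 1 then -v j else 0) := by
    intro j
    by_cases hj : j = i
    · subst hj; simp [Emat, h1]
    · by_cases hj' : j = i + 1
      · subst hj'
        have h1' : i + 1 ≠ i := fun h => h1 h.symm
        simp [Emat, h1']
      · simp [Emat, hj, hj']
  rw [Finset.sum_congr rfl fun j _ => this j, Finset.sum_add_distrib]
  simp [Finset.sum_ite_eq', sub_eq_add_neg]

lemma dot_L (n : ℕ) [NeZero n] (hn : 3 ≤ n) (v : ZMod n → ℝ) :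
    v ⬝ᵥ ((Emat n)ᵀ * Emat n) *ᵥ v = ∑ i, (v i - v (i + 1)) ^ 2 := by
  rw [← Matrix.mulVec_mulVec, Matrix.dotProduct_mulVec, Matrix.vecMul_transpose,
    dotProduct]
  exact Finset.sum_congr rfl fun i _ => by rw [Emat_mulVec n hn, sq]

lemma const_of_mulVec_zero (n : ℕ) [NeZero n] (hn : 3 ≤ n) (v : ZMod n → ℝ)
    (h : Emat n *ᵥ v = 0) : ∀ i, v i = v 0 := by
  have hstep : ∀ i : ZMod n, v (i + 1) = v i := by
    intro i
    have := congrFun h i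
    rw [Emat_mulVec n hn] at this
    simp at this
    linarith [this]
  have hm : ∀ m : ℕ, v ((m : ℕ) : ZMod n) = v 0 := by
    intro m
    induction m with
    | zero => simp
    | succ k ih => push_cast; rw [hstep, ih]
  intro i
  obtain ⟨m, rfl⟩ := (ZMod.natCast_rightInverse (n := n)).surjective i
  exact hm m

lemma mulVec_dot_mulVec (n : ℕ) [NeZero n] (M : Matrix (ZMod n) (ZMod n) ℝ)
    (hM : Mᵀ * M = 1) (v w : ZMod n → ℝ) : (M *ᵥ v) ⬝ᵥ (M *ᵥ w) = v ⬝ᵥ w := by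
  rw [Matrix.dotProduct_mulVec, ← Matrix.mulVec_transpose, Matrix.mulVec_mulVec, hM,
    Matrix.one_mulVec]

lemma spectral_bound (n : ℕ) [NeZero n] (hn : 3 ≤ n)
    (hH : ((Emat n)ᵀ * Emat n).IsHermitian)
    (μ : Fin n → ℝ) (hmono : Monotone μ)
    (hperm : ∃ σ : Fin n ≃ ZMod n, ∀ i, μ i = hH.eigenvalues (σ i))
    (hμpos : 0 < μ ⟨1, lt_of_lt_of_le (by norm_num) hn⟩)
    (y : ZMod n → ℝ) :
    μ ⟨1, lt_of_lt_of_le (by norm_num) hn⟩ * (y ⬝ᵥ y - (∑ i, y i) ^ 2 / n) ≤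
      y ⬝ᵥ ((Emat n)ᵀ * Emat n) *ᵥ y := by
  classical
  set L : Matrix (ZMod n) (ZMod n) ℝ := (Emat n)ᵀ * Emat n with hL
  set W : Matrix (ZMod n) (ZMod n) ℝ := (hH.eigenvectorUnitary : Matrix (ZMod n) (ZMod n) ℝ)
    with hWdef
  set ev : ZMod n → ℝ := hH.eigenvalues with hev
  have hstar : star W = Wᵀ := by
    rw [Matrix.star_eq_conjTranspose, Matrix.conjTranspose_eq_transpose_of_trivial]
  have hW1 : Wᵀ * W = 1 := by rw [← hstar]; exact Unitary.coe_star_mul_self hH.eigenvectorUnitary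
  have hW2 : W * Wᵀ = 1 := by rw [← hstar]; exact Unitary.coe_mul_star_self hH.eigenvectorUnitary
  have hofReal : (RCLike.ofReal ∘ hH.eigenvalues : ZMod n → ℝ) = ev := by
    funext t; simp [hev]
  have hspec : L = W * Matrix.diagonal ev * Wᵀ := by
    rw [← hofReal, ← hstar]; exact hH.spectral_theorem
  set c : ZMod n → ℝ := Wᵀ *ᵥ y with hc
  set b : ZMod n → ℝ := Wᵀ *ᵥ (fun _ => 1) with hb
  have hWt1 : (Wᵀ)ᵀ * Wᵀ = 1 := by rw [Matrix.transpose_transpose]; exact hW2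
  have hcard : (Fintype.card (ZMod n) : ℝ) = (n : ℝ) := by rw [ZMod.card]
  have hn0 : (0 : ℝ) < n := by positivity
  -- quadratic form in eigen-coordinates
  have hyLy : y ⬝ᵥ L *ᵥ y = ∑ k, ev k * c k ^ 2 := by
    rw [hspec, ← Matrix.mulVec_mulVec, ← Matrix.mulVec_mulVec, Matrix.dotProduct_mulVec,
      ← Matrix.mulVec_transpose, ← hc]
    simp only [dotProduct, Matrix.mulVec_diagonal]
    exact Finset.sum_congr rfl fun k _ => by ring
  have hcc : c ⬝ᵥ c = y ⬝ᵥ y := mulVec_dot_mulVec n Wᵀ hWt1 y y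
  have hbb : b ⬝ᵥ b = (n : ℝ) := by
    rw [hb, mulVec_dot_mulVec n Wᵀ hWt1]
    simp [dotProduct, hcard]
  have hbc : b ⬝ᵥ c = ∑ i, y i := by
    rw [hb, hc, mulVec_dot_mulVec n Wᵀ hWt1]
    simp [dotProduct]
  have hLones : L *ᵥ (fun _ => 1) = 0 := by
    rw [hL, ← Matrix.mulVec_mulVec]
    have : Emat n *ᵥ (fun _ => (1 : ℝ)) = 0 := by
      funext i; rw [Emat_mulVec n hn]; simp
    rw [this, Matrix.mulVec_zero]
  have hdb : ∀ k, ev k * b k = 0 := by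
    have h1 : W *ᵥ (Matrix.diagonal ev *ᵥ b) = 0 := by
      rw [hb, Matrix.mulVec_mulVec, Matrix.mulVec_mulVec, ← hspec]
      exact hLones
    have h2 : Matrix.diagonal ev *ᵥ b = 0 := by
      have h1' : Wᵀ *ᵥ (W *ᵥ (Matrix.diagonal ev *ᵥ b)) = Wᵀ *ᵥ 0 := by rw [h1]
      rwa [Matrix.mulVec_mulVec, hW1, Matrix.one_mulVec, Matrix.mulVec_zero] at h1'
    intro k
    have := congrFun h2 k
    simpa [Matrix.mulVec_diagonal] using this
  -- columns of W are eigenvectors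
  have hcol : ∀ k, (fun i => W i k) = ⇑(hH.eigenvectorBasis k) := by
    intro k; funext i; exact Matrix.IsHermitian.eigenvectorUnitary_apply hH i k
  have hLcol : ∀ k, L *ᵥ (fun i => W i k) = ev k • (fun i => W i k) := by
    intro k; rw [hcol k]; exact hH.mulVec_eigenvectorBasis k
  have hker : ∀ k, ev k = 0 → ∀ i, W i k = W 0 k := by
    intro k hk
    have h0 : L *ᵥ (fun i => W i k) = 0 := by rw [hLcol k, hk, zero_smul]
    have h1 : ∑ i, ((fun i => W i k) i - (fun i => W i k) (i + 1)) ^ 2 = 0 := by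
      rw [← dot_L n hn, hL] at *
      rw [h0, dotProduct_zero]
    have h2 : ∀ i : ZMod n, W i k - W (i + 1) k = 0 := by
      intro i
      have := (Finset.sum_eq_zero_iff_of_nonneg (fun j _ => sq_nonneg _)).mp h1 i
        (Finset.mem_univ i)
      exact pow_eq_zero_iff (n := 2) (by norm_num) |>.mp this
    apply const_of_mulVec_zero n hn
    funext i
    rw [Emat_mulVec n hn]
    exact h2 i
  have horth : ∀ k k', (∑ i, W i k * W i k') = if k = k' then 1 else 0 := by
    intro k k'
    have := congrFun (congrFun hW1 k) k'
    simpa [Matrix.mul_apply, Matrix.one_apply, Matrix.transpose_apply] using this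
  -- existence of the kernel index
  obtain ⟨k₀, hk₀⟩ : ∃ k, ev k = 0 := by
    by_contra h
    push_neg at h
    have hb0 : b = 0 := by
      funext k
      rcases mul_eq_zero.mp (hdb k) with h' | h'
      · exact absurd h' (h k)
      · exact h'
    rw [hb0] at hbb
    simp [dotProduct] at hbb
    linarith
  have huniq : ∀ k, ev k = 0 → k = k₀ := by
    intro k hk
    by_contra hne
    have hck : ∀ i, W i k = W 0 k := hker k hk
    have hck₀ : ∀ i, W i k₀ = W 0 k₀ := hker k₀ hk₀
    have hconst : ∀ z : ℝ, (∑ _i : ZMod n, z) = (n : ℝ) * z := by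
      intro z
      rw [Finset.sum_const, Finset.card_univ, nsmul_eq_mul, ← hcard]
    have h1 : (n : ℝ) * (W 0 k * W 0 k) = 1 := by
      have t := horth k k
      rw [if_pos rfl] at t
      rw [Finset.sum_congr rfl fun i _ => by rw [hck i]] at t
      rw [hconst] at t
      exact t
    have h2 : (n : ℝ) * (W 0 k₀ * W 0 k₀) = 1 := by
      have t := horth k₀ k₀
      rw [if_pos rfl] at t
      rw [Finset.sum_congr rfl fun i _ => by rw [hck₀ i]] at t
      rw [hconst] at t
      exact t
    have h3 : (n : ℝ) * (W 0 k * W 0 k₀) = 0 := by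
      have t := horth k k₀
      rw [if_neg hne] at t
      rw [Finset.sum_congr rfl fun i _ => by rw [hck i, hck₀ i]] at t
      rw [hconst] at t
      exact t
    have h4 : W 0 k * W 0 k₀ = 0 := by
      rcases mul_eq_zero.mp h3 with h' | h'
      · exact absurd h' (ne_of_gt hn0)
      · exact h'
    rcases mul_eq_zero.mp h4 with h' | h'
    · rw [h'] at h1; simp at h1
    · rw [h'] at h2; simp at h2
  -- eigenvalues are nonneg
  have hpsd : L.PosSemidef := by
    have := Matrix.posSemidef_conjTranspose_mul_self (Emat n)
    rwa [Matrix.conjTranspose_eq_transpose_of_trivial] at this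
  have hnonneg : ∀ k, 0 ≤ ev k := fun k => hpsd.eigenvalues_nonneg k
  obtain ⟨σ, hσ⟩ := hperm
  have hlam2 : ∀ k, k ≠ k₀ → μ ⟨1, by omega⟩ ≤ ev k := by
    intro k hkne
    have hk : ev k = μ (σ.symm k) := by rw [hσ, Equiv.apply_symm_apply]
    by_cases h0 : σ.symm k = ⟨0, by omega⟩
    · exfalso
      have hle : μ (⟨0, by omega⟩ : Fin n) ≤ μ (σ.symm k₀) := hmono (by
        rw [Fin.le_def]; exact Nat.zero_le _)
      have hk₀' : μ (σ.symm k₀) = 0 := by rw [hσ, Equiv.apply_symm_apply, hk₀]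
      have hk0 : ev k ≤ 0 := by rw [hk, h0]; linarith [hk₀' ▸ hle]
      exact hkne (huniq k (le_antisymm hk0 (hnonneg k)))
    · have h1le : (⟨1, by omega⟩ : Fin n) ≤ σ.symm k := by
        rw [Fin.le_def]
        by_contra hlt
        push_neg at hlt
        exact h0 (Fin.ext (by simpa using Nat.lt_one_iff.mp hlt))
      rw [hk]
      exact hmono h1le
  -- the two sums over the erased set
  have hbk : ∀ k, k ≠ k₀ → b k = 0 := by
    intro k hkne
    rcases mul_eq_zero.mp (hdb k) with h' | h'
    · exact absurd h' (ne_of_gt (lt_of_lt_of_le hμpos (hlam2 k hkne)))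
    · exact h'
  have hbk₀ : b k₀ ^ 2 = (n : ℝ) := by
    have : b ⬝ᵥ b = ∑ k, b k * b k := rfl
    rw [this] at hbb
    rw [← hbb, Finset.sum_eq_single k₀ (fun k _ hk => by rw [hbk k hk]; ring)
      (fun h => absurd (Finset.mem_univ k₀) h)]
    ring
  have hs : (∑ i, y i) ^ 2 / (n : ℝ) = c k₀ ^ 2 := by
    have hbc' : b ⬝ᵥ c = b k₀ * c k₀ := by
      rw [show b ⬝ᵥ c = ∑ k, b k * c k from rfl]
      exact Finset.sum_eq_single k₀ (fun k _ hk => by rw [hbk k hk]; ring)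
        (fun h => absurd (Finset.mem_univ k₀) h)
    rw [← hbc, hbc']
    rw [mul_pow, hbk₀]
    field_simp
  have e1 : y ⬝ᵥ L *ᵥ y = ∑ k ∈ Finset.univ.erase k₀, ev k * c k ^ 2 := by
    rw [hyLy]
    exact (Finset.sum_erase _ (by rw [hk₀, zero_mul])).symm
  have e2 : y ⬝ᵥ y - (∑ i, y i) ^ 2 / n = ∑ k ∈ Finset.univ.erase k₀, c k ^ 2 := by
    have hsq : c ⬝ᵥ c = ∑ k, c k ^ 2 := by
      rw [show c ⬝ᵥ c = ∑ k, c k * c k from rfl]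
      exact Finset.sum_congr rfl fun k _ => (sq (c k)).symm
    rw [hs, ← hcc, hsq, ← Finset.add_sum_erase _ _ (Finset.mem_univ k₀)]
    ring
  rw [e1, e2, Finset.mul_sum]
  exact Finset.sum_le_sum fun k hk =>
    mul_le_mul_of_nonneg_right (hlam2 k (Finset.ne_of_mem_erase hk)) (sq_nonneg _)


lemma mixed_sign (n : ℕ) [NeZero n] (hn : 3 ≤ n) (y : ZMod n → ℝ)
    (hp : ∃ i, 0 < y i) (hq : ∃ i, y i < 0) :
    (∑ i, y i) ^ 2 ≤ ((n : ℝ) - 1) * ∑ i, y i ^ 2 := by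
  obtain ⟨p, hp⟩ := hp
  obtain ⟨q, hq⟩ := hq
  have hcard : ∀ a : ZMod n, ((Finset.univ.erase a).card : ℝ) = (n : ℝ) - 1 := by
    intro a
    rw [Finset.card_erase_of_mem (Finset.mem_univ a), Finset.card_univ, ZMod.card]
    have : 1 ≤ n := by omega
    push_cast [Nat.cast_sub this]
    ring
  have hsub : ∀ a : ZMod n, ∑ i ∈ Finset.univ.erase a, y i ^ 2 ≤ ∑ i, y i ^ 2 := by
    intro a
    exact Finset.sum_le_sum_of_subset_of_nonneg (Finset.subset_univ _)
      (fun i _ _ => sq_nonneg _)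
  rcases le_or_gt 0 (∑ i, y i) with hs | hs
  · have h1 : ∑ i ∈ Finset.univ.erase q, y i = (∑ i, y i) - y q :=
      Finset.sum_erase_eq_sub (Finset.mem_univ q)
    have h2 : (∑ i, y i) ≤ ∑ i ∈ Finset.univ.erase q, y i := by rw [h1]; linarith
    have h3 : (∑ i, y i) ^ 2 ≤ (∑ i ∈ Finset.univ.erase q, y i) ^ 2 :=
      pow_le_pow_left₀ hs h2 2
    have h4 : (∑ i ∈ Finset.univ.erase q, y i) ^ 2 ≤
        ((Finset.univ.erase q).card : ℝ) * ∑ i ∈ Finset.univ.erase q, y i ^ 2 :=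
      sq_sum_le_card_mul_sum_sq
    rw [hcard q] at h4
    have h5 : ((n : ℝ) - 1) * ∑ i ∈ Finset.univ.erase q, y i ^ 2 ≤
        ((n : ℝ) - 1) * ∑ i, y i ^ 2 := by
      apply mul_le_mul_of_nonneg_left (hsub q)
      have : (3 : ℝ) ≤ n := by exact_mod_cast hn
      linarith
    linarith
  · have h1 : ∑ i ∈ Finset.univ.erase p, y i = (∑ i, y i) - y p :=
      Finset.sum_erase_eq_sub (Finset.mem_univ p)
    have h2 : ∑ i ∈ Finset.univ.erase p, y i ≤ (∑ i, y i) := by rw [h1]; linarith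
    have h3 : (∑ i, y i) ^ 2 ≤ (∑ i ∈ Finset.univ.erase p, y i) ^ 2 := by
      have hneg : -(∑ i, y i) ≤ -(∑ i ∈ Finset.univ.erase p, y i) := by linarith
      have h0 : 0 ≤ -(∑ i, y i) := by linarith
      have h6 := pow_le_pow_left₀ h0 hneg 2
      calc (∑ i, y i) ^ 2 = (-(∑ i, y i)) ^ 2 := by ring
        _ ≤ (-(∑ i ∈ Finset.univ.erase p, y i)) ^ 2 := h6
        _ = (∑ i ∈ Finset.univ.erase p, y i) ^ 2 := by ring
    have h4 : (∑ i ∈ Finset.univ.erase p, y i) ^ 2 ≤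
        ((Finset.univ.erase p).card : ℝ) * ∑ i ∈ Finset.univ.erase p, y i ^ 2 :=
      sq_sum_le_card_mul_sum_sq
    rw [hcard p] at h4
    have h5 : ((n : ℝ) - 1) * ∑ i ∈ Finset.univ.erase p, y i ^ 2 ≤
        ((n : ℝ) - 1) * ∑ i, y i ^ 2 := by
      apply mul_le_mul_of_nonneg_left (hsub p)
      have : (3 : ℝ) ≤ n := by exact_mod_cast hn
      linarith
    linarith

/-- Let `λ₂(EᵀE) = μ 1` denote the second-smallest eigenvalue (with multiplicity) of `EᵀE`,
where `μ` lists the eigenvalues of `EᵀE` in nondecreasing order. If `x ∈ ℝⁿ` satisfies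
`‖x‖ ≥ 1` and `D x` has at least one strictly positive and one strictly negative entry, then
`xᵀ A x ≥ (1 / Σᵢ rᵢ) · (λ₂(EᵀE)/n) · minᵢ dᵢ²`. -/
theorem stmt10 (n : ℕ) [NeZero n] (hn : 3 ≤ n)
    (g : ZMod n → Fin 2 → ℝ) (hg : ∀ i, g i ⬝ᵥ g i = 1)
    (r : ZMod n → ℝ) (hr : ∀ i, 0 < r i)
    (hH : ((Emat n)ᵀ * Emat n).IsHermitian)
    (μ : Fin n → ℝ) (hmono : Monotone μ)
    (hperm : ∃ σ : Fin n ≃ ZMod n, ∀ i, μ i = hH.eigenvalues (σ i))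
    (x : ZMod n → ℝ) (hx : 1 ≤ Real.sqrt (∑ i, x i ^ 2))
    (hpos : ∃ i, 0 < (Dmat n g *ᵥ x) i) (hneg : ∃ i, (Dmat n g *ᵥ x) i < 0) :
    (1 / ∑ i, r i) * (μ ⟨1, by omega⟩ / n) *
        (Finset.univ.inf' Finset.univ_nonempty
          fun i : ZMod n => (perp (g i) ⬝ᵥ g (i - 1)) ^ 2) ≤
      x ⬝ᵥ Amat n g r *ᵥ x := by
  classical
  set Y : ZMod n → ℝ := fun i => (perp (g i) ⬝ᵥ g (i - 1)) * x i with hY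
  set m : ℝ := Finset.univ.inf' Finset.univ_nonempty
      (fun i : ZMod n => (perp (g i) ⬝ᵥ g (i - 1)) ^ 2) with hm
  set S : ℝ := ∑ i, r i with hS
  set lam : ℝ := μ ⟨1, by omega⟩ with hlam
  have hn0 : (0 : ℝ) < n := by positivity
  have hquad : x ⬝ᵥ Amat n g r *ᵥ x = ∑ i, (1 / r i) * (Y i - Y (i + 1)) ^ 2 :=
    quad_eq n g hg r x
  have hSpos : 0 < S := Finset.sum_pos (fun i _ => hr i) Finset.univ_nonempty
  have hm_le : ∀ i : ZMod n, m ≤ (perp (g i) ⬝ᵥ g (i - 1)) ^ 2 := fun i =>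
    Finset.inf'_le _ (Finset.mem_univ i)
  have hm0 : 0 ≤ m := Finset.le_inf' _ _ (fun i _ => sq_nonneg _)
  have hx2 : 1 ≤ ∑ i, x i ^ 2 := by
    have h0 : (0 : ℝ) ≤ ∑ i, x i ^ 2 := by positivity
    nlinarith [Real.mul_self_sqrt h0, Real.sqrt_nonneg (∑ i, x i ^ 2)]
  have hYsq : m ≤ ∑ i, Y i ^ 2 := by
    calc m = m * 1 := by ring
      _ ≤ m * ∑ i, x i ^ 2 := by
          apply mul_le_mul_of_nonneg_left hx2 hm0
      _ = ∑ i, m * x i ^ 2 := by rw [Finset.mul_sum]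
      _ ≤ ∑ i, Y i ^ 2 := by
          apply Finset.sum_le_sum
          intro i _
          have := mul_le_mul_of_nonneg_right (hm_le i) (sq_nonneg (x i))
          calc m * x i ^ 2 ≤ (perp (g i) ⬝ᵥ g (i - 1)) ^ 2 * x i ^ 2 := this
            _ = Y i ^ 2 := by rw [hY]; ring
  have hDx : ∀ i, (Dmat n g *ᵥ x) i = Y i := by
    intro i; simp [Dmat, Matrix.mulVec_diagonal, hY]
  have hYpos : ∃ i, 0 < Y i := by obtain ⟨i, hi⟩ := hpos; exact ⟨i, by rwa [hDx i] at hi⟩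
  have hYneg : ∃ i, Y i < 0 := by obtain ⟨i, hi⟩ := hneg; exact ⟨i, by rwa [hDx i] at hi⟩
  -- nonnegativity of lam
  have hpsd : ((Emat n)ᵀ * Emat n).PosSemidef := by
    have := Matrix.posSemidef_conjTranspose_mul_self (Emat n)
    rwa [Matrix.conjTranspose_eq_transpose_of_trivial] at this
  have hlam0 : 0 ≤ lam := by
    obtain ⟨σ, hσ⟩ := hperm
    rw [hlam, hσ]
    exact hpsd.eigenvalues_nonneg _
  rcases eq_or_lt_of_le hlam0 with hl0 | hlpos
  · -- second eigenvalue is zero : trivial bound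
    rw [← hl0]
    have : (1 / S) * (0 / (n : ℝ)) * m = 0 := by ring
    rw [this, hquad]
    apply Finset.sum_nonneg
    intro i _
    exact mul_nonneg (one_div_nonneg.mpr (hr i).le) (sq_nonneg _)
  · -- main case
    have hstep1 : (1 / S) * ∑ i, (Y i - Y (i + 1)) ^ 2 ≤ x ⬝ᵥ Amat n g r *ᵥ x := by
      rw [hquad, Finset.mul_sum]
      apply Finset.sum_le_sum
      intro i _
      apply mul_le_mul_of_nonneg_right _ (sq_nonneg _)
      apply one_div_le_one_div_of_le (hr i)
      exact Finset.single_le_sum (fun j _ => (hr j).le) (Finset.mem_univ i)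
    have hYY : Y ⬝ᵥ Y = ∑ i, Y i ^ 2 := by
      rw [show Y ⬝ᵥ Y = ∑ i, Y i * Y i from rfl]
      exact Finset.sum_congr rfl fun i _ => (sq (Y i)).symm
    have hstep2 : lam * (Y ⬝ᵥ Y - (∑ i, Y i) ^ 2 / n) ≤ ∑ i, (Y i - Y (i + 1)) ^ 2 := by
      rw [← dot_L n hn Y]
      exact spectral_bound n hn hH μ hmono hperm hlpos Y
    have hmix : (∑ i, Y i) ^ 2 ≤ ((n : ℝ) - 1) * ∑ i, Y i ^ 2 :=
      mixed_sign n hn Y hYpos hYneg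
    have hstep3 : m / n ≤ Y ⬝ᵥ Y - (∑ i, Y i) ^ 2 / n := by
      rw [hYY]
      have h1 : (∑ i, Y i) ^ 2 / n ≤ (((n : ℝ) - 1) * ∑ i, Y i ^ 2) / n :=
        (div_le_div_iff_of_pos_right hn0).mpr hmix
      have h2 : (((n : ℝ) - 1) * ∑ i, Y i ^ 2) / n = (∑ i, Y i ^ 2) - (∑ i, Y i ^ 2) / n := by
        field_simp
      have h3 : m / n ≤ (∑ i, Y i ^ 2) / n := (div_le_div_iff_of_pos_right hn0).mpr hYsq
      linarith
    calc (1 / S) * (lam / (n : ℝ)) * m = (1 / S) * (lam * (m / n)) := by ring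
      _ ≤ (1 / S) * (lam * (Y ⬝ᵥ Y - (∑ i, Y i) ^ 2 / n)) := by
          apply mul_le_mul_of_nonneg_left _ (by positivity)
          exact mul_le_mul_of_nonneg_left hstep3 hlam0
      _ ≤ (1 / S) * ∑ i, (Y i - Y (i + 1)) ^ 2 := by
          apply mul_le_mul_of_nonneg_left hstep2 (by positivity)
      _ ≤ x ⬝ᵥ Amat n g r *ᵥ x := hstep1
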